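/- For every integer a ≥ 5, the coin system (1, 2, 3, a, a+1, 2a) is orderly, while its five-value prefix (1, 2, 3, a, a+1) is not orderly (2a is a counterexample). -/

import Mathlib

/-- The largest coin value in `C` that is at most `v` (or 0 if none). -/
def coinMax (C : List ℕ) (v : ℕ) : ℕ := (C.filter (· ≤ v)).foldr max 0

/-- Fuelled greedy coin count. -/
def grdAux (C : List ℕ) : ℕ → ℕ → ℕ
  | 0, _ => 0
  | fuel + 1, v =>
    let c := coinMax C v
    if v = 0 ∨ c = 0 then 0 else 1 + grdAux C fuel (v - c)

/-- Number of coins used by the greedy algorithm to represent `v` with coin system `C`. -/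
def grd (C : List ℕ) (v : ℕ) : ℕ := grdAux C v v

/-- The set of sizes of representations of `v` as nonnegative integer combinations of
the coin values in `C`. -/
def reprCosts (C : List ℕ) (v : ℕ) : Set ℕ :=
  {k | ∃ x : List ℕ, x.length = C.length ∧ (List.zipWith (· * ·) x C).sum = v ∧ x.sum = k}

/-- Minimum number of coins needed to represent `v` with coin system `C`. -/
noncomputable def opt (C : List ℕ) (v : ℕ) : ℕ := sInf (reprCosts C v)

/-- A coin system is orderly if greedy is optimal for every positive value. -/
def Orderly (C : List ℕ) : Prop := ∀ v : ℕ, 0 < v → grd C v = opt C v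

/-! ### Generic lemmas about the fuelled greedy function -/

lemma grdAux_succ (C : List ℕ) (f v : ℕ) :
    grdAux C (f+1) v = if v = 0 ∨ coinMax C v = 0 then 0 else 1 + grdAux C f (v - coinMax C v) :=
  rfl

lemma grdAux_zero (C : List ℕ) (f : ℕ) : grdAux C f 0 = 0 := by cases f <;> rfl

lemma grdAux_eq (C : List ℕ) (hC : ∀ w, 0 < w → 0 < coinMax C w) :
    ∀ f₁ f₂ v, v ≤ f₁ → v ≤ f₂ → grdAux C f₁ v = grdAux C f₂ v := by
  intro f₁
  induction f₁ with
  | zero =>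
    intro f₂ v h1 _
    have : v = 0 := by omega
    subst this
    rw [grdAux_zero, grdAux_zero]
  | succ f ih =>
    intro f₂ v h1 h2
    rcases Nat.eq_zero_or_pos v with rfl|hv
    · rw [grdAux_zero, grdAux_zero]
    · obtain ⟨f₂', rfl⟩ : ∃ f', f₂ = f' + 1 := ⟨f₂ - 1, by omega⟩
      have hc := hC v hv
      rw [grdAux_succ, grdAux_succ, if_neg (by omega), if_neg (by omega)]
      rw [ih f₂' (v - coinMax C v) (by omega) (by omega)]

lemma grd_step (C : List ℕ) (hC : ∀ w, 0 < w → 0 < coinMax C w) {v : ℕ} (hv : 0 < v) :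
    grd C v = 1 + grd C (v - coinMax C v) := by
  have hc := hC v hv
  show grdAux C v v = _
  obtain ⟨f, rfl⟩ : ∃ f, v = f + 1 := ⟨v - 1, by omega⟩
  rw [grdAux_succ, if_neg (by omega)]
  congr 1
  exact grdAux_eq C hC f _ _ (by omega) le_rfl

lemma grd_zero (C : List ℕ) : grd C 0 = 0 := rfl

/-! ### Generic lemmas about representations -/

lemma zip_repl (C : List ℕ) : (List.zipWith (· * ·) (List.replicate C.length 0) C).sum = 0 := by
  induction C with
  | nil => rfl
  | cons h t ih => simp [List.replicate_succ, ih]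

lemma zero_mem (C : List ℕ) : (0:ℕ) ∈ reprCosts C 0 :=
  ⟨List.replicate C.length 0, by simp, zip_repl C, by simp⟩

lemma zip_val_zero : ∀ (x C : List ℕ), x.sum = 0 → (List.zipWith (· * ·) x C).sum = 0 := by
  intro x
  induction x with
  | nil => simp
  | cons h t ih =>
    intro C hs
    cases C with
    | nil => simp
    | cons d u =>
      simp only [List.sum_cons] at hs
      have h1 : h = 0 := by omega
      have h2 : t.sum = 0 := by omega
      simp [h1, ih u h2]

lemma add_coin : ∀ (C : List ℕ) (c : ℕ), c ∈ C → ∀ v k,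
    k ∈ reprCosts C v → k + 1 ∈ reprCosts C (v + c) := by
  intro C
  induction C with
  | nil => intro c hc; simp at hc
  | cons d t ih =>
    intro c hc v k hk
    obtain ⟨x, hlen, hval, hsum⟩ := hk
    cases x with
    | nil => simp at hlen
    | cons x0 xs =>
      simp only [List.length_cons, Nat.add_right_cancel_iff] at hlen
      rcases List.mem_cons.mp hc with rfl|hc'
      · refine ⟨(x0+1) :: xs, by simp [hlen], ?_, by simp only [List.sum_cons] at hsum ⊢; omega⟩
        simp only [List.zipWith_cons_cons, List.sum_cons] at hval ⊢
        rw [Nat.succ_mul, ← hval]; ring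
      · obtain ⟨y, hly, hvy, hsy⟩ := ih c hc' (List.zipWith (· * ·) xs t).sum xs.sum ⟨xs, hlen, rfl, rfl⟩
        refine ⟨x0 :: y, by simp [hly], ?_, ?_⟩
        · simp only [List.zipWith_cons_cons, List.sum_cons] at hval ⊢
          rw [hvy, ← hval]; ring
        · simp only [List.sum_cons] at hsum ⊢; omega

lemma remove_coin : ∀ (C x : List ℕ), x.length = C.length → 0 < x.sum →
    ∃ c ∈ C, c ≤ (List.zipWith (· * ·) x C).sum ∧
      (x.sum - 1) ∈ reprCosts C ((List.zipWith (· * ·) x C).sum - c) := by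
  intro C
  induction C with
  | nil =>
    intro x hl hs
    cases x with
    | nil => simp at hs
    | cons a b => simp at hl
  | cons d t ih =>
    intro x hl hs
    cases x with
    | nil => simp at hs
    | cons x0 xs =>
      simp only [List.length_cons, Nat.add_right_cancel_iff] at hl
      by_cases h0 : x0 = 0
      · subst h0
        have hs' : 0 < xs.sum := by simp only [List.sum_cons] at hs; omega
        obtain ⟨c, hct, hcle, y, hly, hvy, hsy⟩ := ih xs hl hs'
        refine ⟨c, List.mem_cons_of_mem _ hct, by simpa using hcle, 0 :: y, by simp [hly], ?_, ?_⟩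
        · simpa using hvy
        · simp only [List.sum_cons] at hsy ⊢; omega
      · obtain ⟨x1, rfl⟩ : ∃ x1, x0 = x1 + 1 := ⟨x0 - 1, by omega⟩
        refine ⟨d, List.mem_cons_self, ?_, x1 :: xs, by simp [hl], ?_, ?_⟩
        · simp only [List.zipWith_cons_cons, List.sum_cons, Nat.succ_mul]
          omega
        · simp only [List.zipWith_cons_cons, List.sum_cons, Nat.succ_mul]
          omega
        · simp only [List.sum_cons]; omega

/-! ### The six-coin system -/

lemma cm6 (a v : ℕ) (ha : 5 ≤ a) :
    coinMax [1,2,3,a,a+1,2*a] v =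
      (if 2*a ≤ v then 2*a else if a+1 ≤ v then a+1 else if a ≤ v then a
       else if 3 ≤ v then 3 else v) := by
  simp only [coinMax, List.filter_cons, List.filter_nil, decide_eq_true_eq]
  split_ifs <;> simp only [List.foldr_cons, List.foldr_nil] <;> omega

lemma hC6 (a : ℕ) (ha : 5 ≤ a) : ∀ w, 0 < w → 0 < coinMax [1,2,3,a,a+1,2*a] w := by
  intro w hw
  rw [cm6 a w ha]
  split_ifs <;> omega

/-- Closed form of the greedy count below `2*a`. -/
def F (a v : ℕ) : ℕ := if v < a then (v+2)/3 else if v ≤ a+1 then 1 else 1 + (v-a+1)/3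

lemma grd6_lt (a : ℕ) (ha : 5 ≤ a) : ∀ v, v < 2*a → grd [1,2,3,a,a+1,2*a] v = F a v := by
  intro v
  induction v using Nat.strong_induction_on with
  | _ v ih =>
    intro hv
    rcases Nat.eq_zero_or_pos v with rfl|hv0
    · rw [grd_zero]; simp only [F]; split_ifs <;> omega
    · rw [grd_step _ (hC6 a ha) hv0, cm6 a v ha]
      by_cases h1 : a+1 ≤ v
      · rw [if_neg (by omega), if_pos h1, ih (v - (a+1)) (by omega) (by omega)]
        simp only [F]; split_ifs <;> omega
      · by_cases h2 : a ≤ v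
        · rw [if_neg (by omega), if_neg h1, if_pos h2, ih (v - a) (by omega) (by omega)]
          simp only [F]; split_ifs <;> omega
        · by_cases h3 : 3 ≤ v
          · rw [if_neg (by omega), if_neg h1, if_neg h2, if_pos h3,
              ih (v - 3) (by omega) (by omega)]
            simp only [F]; split_ifs <;> omega
          · rw [if_neg (by omega), if_neg h1, if_neg h2, if_neg h3,
              ih (v - v) (by omega) (by omega)]
            simp only [F]; split_ifs <;> omega

lemma grd6_step2a (a : ℕ) (ha : 5 ≤ a) {v : ℕ} (hv : 2*a ≤ v) :
    grd [1,2,3,a,a+1,2*a] v = 1 + grd [1,2,3,a,a+1,2*a] (v - 2*a) := by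
  rw [grd_step _ (hC6 a ha) (by omega), cm6 a v ha, if_pos hv]

/-- Key exchange lemma: removing any available coin costs at most one greedy coin. -/
lemma K6 (a : ℕ) (ha : 5 ≤ a) : ∀ v c, c ∈ [1,2,3,a,a+1,2*a] → c ≤ v →
    grd [1,2,3,a,a+1,2*a] v ≤ grd [1,2,3,a,a+1,2*a] (v-c) + 1 := by
  intro v
  induction v using Nat.strong_induction_on with
  | _ v ih =>
    intro c hc hcv
    have hcmem : c = 1 ∨ c = 2 ∨ c = 3 ∨ c = a ∨ c = a+1 ∨ c = 2*a := by
      simpa using hc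
    have hc2a : c ≤ 2*a := by omega
    have hc1 : 1 ≤ c := by omega
    by_cases hbig : 2*a ≤ v
    · by_cases h2 : 2*a ≤ v - c
      · rw [grd6_step2a a ha hbig, grd6_step2a a ha h2]
        have heq : v - c - 2*a = v - 2*a - c := by omega
        rw [heq]
        have := ih (v - 2*a) (by omega) c hc (by omega)
        omega
      · rw [grd6_step2a a ha hbig, grd6_lt a ha (v - 2*a) (by omega),
          grd6_lt a ha (v - c) (by omega)]
        rcases hcmem with rfl|rfl|rfl|rfl|rfl|rfl <;>
          · simp only [F]; split_ifs <;> omega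
    · rw [grd6_lt a ha v (by omega), grd6_lt a ha (v - c) (by omega)]
      rcases hcmem with rfl|rfl|rfl|rfl|rfl|rfl <;>
        · simp only [F]; split_ifs <;> omega

lemma grd6_mem (a : ℕ) (ha : 5 ≤ a) :
    ∀ v, grd [1,2,3,a,a+1,2*a] v ∈ reprCosts [1,2,3,a,a+1,2*a] v := by
  intro v
  induction v using Nat.strong_induction_on with
  | _ v ih =>
    rcases Nat.eq_zero_or_pos v with rfl|hv
    · rw [grd_zero]; exact zero_mem _
    · have hmem : coinMax [1,2,3,a,a+1,2*a] v ∈ [1,2,3,a,a+1,2*a] := by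
        rw [cm6 a v ha]; split_ifs <;> simp <;> omega
      have hle : coinMax [1,2,3,a,a+1,2*a] v ≤ v := by
        rw [cm6 a v ha]; split_ifs <;> omega
      have hpos := hC6 a ha v hv
      rw [grd_step _ (hC6 a ha) hv]
      have := add_coin _ _ hmem _ _ (ih (v - coinMax [1,2,3,a,a+1,2*a] v) (by omega))
      rw [Nat.sub_add_cancel hle] at this
      rwa [Nat.add_comm (grd _ _) 1] at this

lemma grd6_le (a : ℕ) (ha : 5 ≤ a) :
    ∀ k v, k ∈ reprCosts [1,2,3,a,a+1,2*a] v → grd [1,2,3,a,a+1,2*a] v ≤ k := by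
  intro k
  induction k using Nat.strong_induction_on with
  | _ k ih =>
    intro v hk
    rcases Nat.eq_zero_or_pos v with rfl|hv
    · rw [grd_zero]; omega
    · obtain ⟨x, hl, hv', hs⟩ := hk
      have hx : 0 < x.sum := by
        rcases Nat.eq_zero_or_pos x.sum with h0|h0
        · rw [zip_val_zero x _ h0] at hv'; omega
        · exact h0
      obtain ⟨c, hcC, hcle, hrc⟩ := remove_coin _ x hl hx
      rw [hv'] at hcle hrc
      rw [hs] at hrc
      have h1 := K6 a ha v c hcC hcle
      have h2 := ih (k-1) (by omega) (v - c) hrc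
      omega

/-! ### The five-coin system -/

lemma cm5 (a v : ℕ) (ha : 5 ≤ a) :
    coinMax [1,2,3,a,a+1] v =
      (if a+1 ≤ v then a+1 else if a ≤ v then a else if 3 ≤ v then 3 else v) := by
  simp only [coinMax, List.filter_cons, List.filter_nil, decide_eq_true_eq]
  split_ifs <;> simp only [List.foldr_cons, List.foldr_nil] <;> omega

lemma hC5 (a : ℕ) (ha : 5 ≤ a) : ∀ w, 0 < w → 0 < coinMax [1,2,3,a,a+1] w := by
  intro w hw
  rw [cm5 a w ha]
  split_ifs <;> omega

theorem stmt_12 (a : ℕ) (ha : 5 ≤ a) :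
    Orderly [1, 2, 3, a, a + 1, 2 * a] ∧
    ¬ Orderly [1, 2, 3, a, a + 1] ∧
    opt [1, 2, 3, a, a + 1] (2 * a) < grd [1, 2, 3, a, a + 1] (2 * a) := by
  have h2mem : (2:ℕ) ∈ reprCosts [1,2,3,a,a+1] (2*a) := by
    refine ⟨[0,0,0,2,0], rfl, ?_, rfl⟩
    simp
  have hopt : opt [1,2,3,a,a+1] (2*a) ≤ 2 := Nat.sInf_le h2mem
  have e1 : grd [1,2,3,a,a+1] (2*a) = 1 + grd [1,2,3,a,a+1] (a-1) := by
    rw [grd_step _ (hC5 a ha) (by omega), cm5 a (2*a) ha, if_pos (by omega)]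
    rw [show 2*a - (a+1) = a - 1 by omega]
  have e2 : grd [1,2,3,a,a+1] (a-1) = 1 + grd [1,2,3,a,a+1] (a-4) := by
    rw [grd_step _ (hC5 a ha) (by omega), cm5 a (a-1) ha, if_neg (by omega),
      if_neg (by omega), if_pos (by omega)]
    rw [show a - 1 - 3 = a - 4 by omega]
  have e3 : 1 ≤ grd [1,2,3,a,a+1] (a-4) := by
    rw [grd_step _ (hC5 a ha) (by omega)]
    omega
  have hgrd : 3 ≤ grd [1,2,3,a,a+1] (2*a) := by omega
  refine ⟨?_, ?_, by omega⟩
  · intro v hv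
    have hm := grd6_mem a ha v
    apply le_antisymm
    · exact le_csInf ⟨_, hm⟩ (fun k hk => grd6_le a ha k v hk)
    · exact Nat.sInf_le hm
  · intro h
    have := h (2*a) (by omega)
    omega
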